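/- Let p be a prime number, let C⁺ be a perfect valuation ring of characteristic p, and let E⁺ be a valuation ring extension of C⁺. Then for every f ∈ E⁺, the universal derivation satisfies d f = 0 in Ω¹_{E⁺/C⁺} if and only if f = g^p for some g ∈ E⁺. (This is the degree-0 case of the Cartier isomorphism for the extension C⁺ → E⁺: since C⁺ is perfect and E⁺ is a domain, the inverse Cartier map C⁻¹ : Ω⁰_{E⁺/C⁺} ⊗_{C⁺,φ} C⁺ → H⁰(Ω•_{E⁺/C⁺}) identifies with the map f ↦ f^p from E⁺ to the kernel of d, so its bijectivity is exactly this assertion.) -/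

import Mathlib

open Polynomial

/-- The graph of a partial derivation on a subfield of `K`, killing `p`-th powers. -/
structure IsPD (p : ℕ) {K : Type} [Field K] (G : Set (K × K)) : Prop where
  uniq : ∀ ⦃x y₁ y₂ : K⦄, (x, y₁) ∈ G → (x, y₂) ∈ G → y₁ = y₂
  pow : ∀ z : K, (z ^ p, (0 : K)) ∈ G
  add : ∀ ⦃x y x' y' : K⦄, (x, y) ∈ G → (x', y') ∈ G → (x + x', y + y') ∈ G
  mul : ∀ ⦃x y x' y' : K⦄, (x, y) ∈ G → (x', y') ∈ G → (x * x', x * y' + x' * y) ∈ G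
  neg : ∀ ⦃x y : K⦄, (x, y) ∈ G → (-x, -y) ∈ G
  inv : ∀ ⦃x y : K⦄, x ≠ 0 → (x, y) ∈ G → (x⁻¹, -(y * (x⁻¹ * x⁻¹))) ∈ G

variable {K : Type} [Field K]

theorem IsPD.extend {p : ℕ} (hp : p.Prime) [CharP K p] {G : Set (K × K)} (hG : IsPD p G)
    (x : K) (hx : ∀ y, (x, y) ∉ G) (c : K) :
    ∃ G' : Set (K × K), IsPD p G' ∧ G ⊆ G' ∧ (x, c) ∈ G' := by
  classical
  haveI : Fact p.Prime := ⟨hp⟩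
  set N : Subfield K :=
    { carrier := {z | ∃ w, (z, w) ∈ G}
      zero_mem' := ⟨0, by simpa [zero_pow hp.ne_zero] using hG.pow 0⟩
      one_mem' := ⟨0, by simpa using hG.pow 1⟩
      add_mem' := by rintro a b ⟨w, hw⟩ ⟨w', hw'⟩; exact ⟨_, hG.add hw hw'⟩
      mul_mem' := by rintro a b ⟨w, hw⟩ ⟨w', hw'⟩; exact ⟨_, hG.mul hw hw'⟩
      neg_mem' := by rintro a ⟨w, hw⟩; exact ⟨_, hG.neg hw⟩
      inv_mem' := fun z hz => by
        rcases eq_or_ne z 0 with rfl | hz0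
        · simpa using hz
        · obtain ⟨w, hw⟩ := hz
          exact ⟨_, hG.inv hz0 hw⟩ } with hNdef
  have halg : ∀ n : N, algebraMap N K n = ↑n := fun _ => rfl
  set d : K → K := fun z => if h : ∃ w, (z, w) ∈ G then h.choose else 0 with hdd
  have hdG : ∀ {z w : K}, (z, w) ∈ G → d z = w := by
    intro z w h
    have h' : ∃ w, (z, w) ∈ G := ⟨w, h⟩
    have hc := h'.choose_spec
    rw [hdd]; simp only [dif_pos h']
    exact hG.uniq hc h
  have hdmem : ∀ z : K, z ∈ N → (z, d z) ∈ G := by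
    rintro z ⟨w, hw⟩; rw [hdG hw]; exact hw
  have hd1 : d 1 = 0 := by simpa using hdG (by simpa using hG.pow 1)
  have hdpow : ∀ z : K, d (z ^ p) = 0 := fun z => hdG (hG.pow z)
  have hdadd : ∀ q r : N, d (↑q + ↑r) = d ↑q + d ↑r := fun q r =>
    hdG (hG.add (hdmem _ q.2) (hdmem _ r.2))
  have hdmul : ∀ q r : N, d (↑q * ↑r) = ↑q * d ↑r + ↑r * d ↑q := fun q r =>
    hdG (hG.mul (hdmem _ q.2) (hdmem _ r.2))
  have hdneg : ∀ q : N, d (-(↑q : K)) = - d ↑q := fun q =>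
    hdG (hG.neg (hdmem _ q.2))
  have hd0 : d 0 = 0 := by simpa [zero_pow hp.ne_zero] using hdpow 0
  have hdsub : ∀ q r : N, d (↑q - ↑r) = d ↑q - d ↑r := by
    intro q r
    have := hdadd q (-r)
    push_cast at this
    rw [hdneg r] at this
    rw [sub_eq_add_neg, this, sub_eq_add_neg]
  have hxN : x ∉ N := fun h => by
    obtain ⟨w, hw⟩ := h
    exact hx w hw
  set a : N := ⟨x ^ p, ⟨0, hG.pow x⟩⟩ with hadef
  have hb : ∀ b : N, b ^ p ≠ a := by
    rintro b hbp
    apply hxN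
    have h1 : ((b : K)) ^ p = x ^ p := by
      have := congrArg (Subtype.val) hbp
      push_cast at this
      simpa [hadef] using this
    have h2 : (x - (b : K)) ^ p = 0 := by
      rw [sub_pow_char, h1, sub_self]
    have h3 : x = (b : K) := by
      have := pow_eq_zero_iff hp.ne_zero |>.mp h2
      rwa [sub_eq_zero] at this
    rw [h3]; exact b.2
  have hirr : Irreducible (X ^ p - C a) := X_pow_sub_C_irreducible_of_prime hp hb
  have hmonic : (X ^ p - C a).Monic := monic_X_pow_sub_C a hp.ne_zero
  have haev : Polynomial.aeval x (X ^ p - C a) = 0 := by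
    rw [map_sub, map_pow, aeval_X, aeval_C, halg]
    simp [hadef]
  have hint : IsIntegral N x := ⟨_, hmonic, haev⟩
  have hmin : minpoly N x = X ^ p - C a := (minpoly.eq_of_irreducible_of_monic hirr haev hmonic).symm
  set Ψ : Polynomial N → K := fun Q => Q.sum fun i q => d ↑q * x ^ i with hΨdef
  have hΨadd : ∀ Q R : Polynomial N, Ψ (Q + R) = Ψ Q + Ψ R := by
    intro Q R
    apply Polynomial.sum_add_index
    · intro i; simp [hd0]
    · intro i q r
      push_cast
      rw [hdadd q r]; ring
  have hΨmono : ∀ (i : ℕ) (q : N), Ψ (Polynomial.monomial i q) = d ↑q * x ^ i := by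
    intro i q
    apply Polynomial.sum_monomial_index
    simp [hd0]
  have hΨzero : Ψ 0 = 0 := Polynomial.sum_zero_index _
  have hΨneg : ∀ Q : Polynomial N, Ψ (-Q) = - Ψ Q := by
    intro Q
    have := hΨadd Q (-Q)
    rw [add_neg_cancel, hΨzero] at this
    linear_combination -this
  have hΨsub : ∀ Q R : Polynomial N, Ψ (Q - R) = Ψ Q - Ψ R := by
    intro Q R
    rw [sub_eq_add_neg, hΨadd, hΨneg, sub_eq_add_neg]
  have hΨmul : ∀ Q R : Polynomial N,
      Ψ (Q * R) = Polynomial.aeval x Q * Ψ R + Polynomial.aeval x R * Ψ Q := by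
    intro Q R
    induction Q using Polynomial.induction_on' with
    | add Q₁ Q₂ h₁ h₂ =>
      rw [add_mul, hΨadd, h₁, h₂, map_add, hΨadd]; ring
    | monomial i q =>
      induction R using Polynomial.induction_on' with
      | add R₁ R₂ h₁ h₂ =>
        rw [mul_add, hΨadd, h₁, h₂, map_add, hΨadd]; ring
      | monomial j r =>
        rw [Polynomial.monomial_mul_monomial, hΨmono, hΨmono, hΨmono,
          Polynomial.aeval_monomial, Polynomial.aeval_monomial, halg, halg]
        have : d ↑(q * r) = ↑q * d ↑r + ↑r * d ↑q := by
          have := hdmul q r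
          push_cast at this ⊢
          exact this
        rw [this, pow_add]
        ring
  set Φ : Polynomial N → K := fun Q => Ψ Q + Polynomial.aeval x (Polynomial.derivative Q) * c
    with hΦdef
  have hΦadd : ∀ Q R : Polynomial N, Φ (Q + R) = Φ Q + Φ R := by
    intro Q R
    rw [hΦdef]; dsimp only
    rw [hΨadd, map_add, map_add]; ring
  have hΦsub : ∀ Q R : Polynomial N, Φ (Q - R) = Φ Q - Φ R := by
    intro Q R
    rw [hΦdef]; dsimp only
    rw [hΨsub, map_sub, map_sub]; ring
  have hΦmul : ∀ Q R : Polynomial N,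
      Φ (Q * R) = Polynomial.aeval x Q * Φ R + Polynomial.aeval x R * Φ Q := by
    intro Q R
    rw [hΦdef]; dsimp only
    rw [hΨmul, Polynomial.derivative_mul, map_add, map_mul, map_mul]
    ring
  have hΦC : ∀ n : N, Φ (C n) = d ↑n := by
    intro n
    rw [hΦdef]; dsimp only
    rw [Polynomial.derivative_C, map_zero, zero_mul, add_zero, hΨdef]
    dsimp only
    rw [Polynomial.sum_C_index (by simp [hd0])]
    simp
  have hΦq : Φ (X ^ p - C a) = 0 := by
    have h1 : Ψ (X ^ p - C a) = 0 := by
      rw [hΨsub, Polynomial.X_pow_eq_monomial, hΨmono]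
      have : Ψ (C a) = d ↑a := by
        rw [hΨdef]; dsimp only
        rw [Polynomial.sum_C_index (by simp [hd0])]
        simp
      rw [this]
      have ha0 : d ↑a = 0 := hdG (hG.pow x)
      push_cast
      rw [ha0, hd1]; ring
    have h2 : Polynomial.derivative (X ^ p - C a) = 0 := by
      rw [Polynomial.derivative_sub, Polynomial.derivative_C, Polynomial.derivative_X_pow]
      have : ((p : ℕ) : Polynomial N) = 0 := by
        rw [← Polynomial.C_eq_natCast, CharP.cast_eq_zero N p, Polynomial.C_0]
      rw [Polynomial.C_eq_natCast, this, zero_mul, sub_zero]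
    rw [hΦdef]; dsimp only
    rw [h1, h2, map_zero, zero_mul, add_zero]
  have hker : ∀ Q : Polynomial N, Polynomial.aeval x Q = 0 → Φ Q = 0 := by
    intro Q hQ
    obtain ⟨R, hR⟩ := minpoly.dvd N x hQ
    rw [hmin] at hR
    rw [hR, hΦmul, haev, hΦq]
    ring
  have hwd : ∀ Q R : Polynomial N, Polynomial.aeval x Q = Polynomial.aeval x R → Φ Q = Φ R := by
    intro Q R h
    have := hker (Q - R) (by rw [map_sub, h, sub_self])
    rw [hΦsub] at this
    exact sub_eq_zero.mp this
  have hΦ0 : Φ (0 : Polynomial N) = 0 := by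
    rw [hΦdef]; dsimp only; rw [hΨzero, map_zero, map_zero, zero_mul, add_zero]
  have hΦ1 : Φ (1 : Polynomial N) = 0 := by
    rw [← Polynomial.C_1, hΦC]
    push_cast
    exact hd1
  have hrange : ∀ z : K,
      z ∈ IntermediateField.adjoin N {x} ↔ ∃ Q : Polynomial N, Polynomial.aeval x Q = z := by
    intro z
    rw [← IntermediateField.mem_toSubalgebra,
      IntermediateField.adjoin_simple_toSubalgebra_of_isAlgebraic hint.isAlgebraic,
      Algebra.adjoin_singleton_eq_range_aeval, AlgHom.mem_range]
  refine ⟨{zw : K × K | ∃ Q : Polynomial N, Polynomial.aeval x Q = zw.1 ∧ Φ Q = zw.2},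
    ?_, ?_, ?_⟩
  · constructor
    · rintro z y₁ y₂ ⟨Q, hQ1, hQ2⟩ ⟨R, hR1, hR2⟩
      dsimp only at hQ1 hQ2 hR1 hR2
      rw [← hQ2, ← hR2]
      exact hwd Q R (hQ1.trans hR1.symm)
    · intro z
      refine ⟨C ⟨z ^ p, ⟨0, hG.pow z⟩⟩, ?_, ?_⟩
      · rw [aeval_C, halg]
      · rw [hΦC]; exact hdG (hG.pow z)
    · rintro u y u' y' ⟨Q, hQ1, hQ2⟩ ⟨R, hR1, hR2⟩
      exact ⟨Q + R, by rw [map_add, hQ1, hR1], by rw [hΦadd, hQ2, hR2]⟩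
    · rintro u y u' y' ⟨Q, hQ1, hQ2⟩ ⟨R, hR1, hR2⟩
      exact ⟨Q * R, by rw [map_mul, hQ1, hR1], by rw [hΦmul, hQ1, hR1, hQ2, hR2]⟩
    · rintro u y ⟨Q, hQ1, hQ2⟩
      refine ⟨-Q, by rw [map_neg, hQ1], ?_⟩
      have hneg : Φ (-Q) = Φ 0 - Φ Q := by rw [← hΦsub, zero_sub]
      rw [hneg, hΦ0, hQ2, zero_sub]
    · rintro u y hu ⟨Q, hQ1, hQ2⟩
      dsimp only at hQ1 hQ2
      have humem : u ∈ IntermediateField.adjoin N {x} := (hrange u).mpr ⟨Q, hQ1⟩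
      obtain ⟨R, hR1⟩ := (hrange u⁻¹).mp (inv_mem humem)
      refine ⟨R, hR1, ?_⟩
      have h1 : Polynomial.aeval x (Q * R) = Polynomial.aeval x (1 : Polynomial N) := by
        rw [map_mul, hQ1, hR1, map_one, mul_inv_cancel₀ hu]
      have h2 := hwd _ _ h1
      rw [hΦmul, hQ1, hR1, hΦ1] at h2
      have h3 : u⁻¹ * u = 1 := inv_mul_cancel₀ hu
      rw [← hQ2]
      show Φ R = -(Φ Q * (u⁻¹ * u⁻¹))
      linear_combination u⁻¹ * h2 - Φ R * h3
  · rintro ⟨z, w⟩ h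
    exact ⟨C ⟨z, ⟨w, h⟩⟩, by rw [aeval_C, halg], by rw [hΦC]; exact hdG h⟩
  · refine ⟨X, aeval_X x, ?_⟩
    rw [hΦdef]; dsimp only
    rw [Polynomial.derivative_X, map_one, one_mul]
    rw [← Polynomial.monomial_one_one_eq_X, hΨmono]
    push_cast
    rw [hd1]
    ring

theorem exists_pd_derivation (p : ℕ) (hp : p.Prime) [CharP K p]
    (f : K) (hf : ∀ g : K, g ^ p ≠ f) :
    ∃ D : K → K, D f = 1 ∧ (∀ u v, D (u + v) = D u + D v) ∧
      (∀ u v, D (u * v) = u * D v + v * D u) ∧ ∀ z, D (z ^ p) = 0 := by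
  classical
  haveI : Fact p.Prime := ⟨hp⟩
  set G₀ : Set (K × K) := {zw | ∃ z : K, zw = (z ^ p, 0)} with hG₀def
  have hG₀ : IsPD p G₀ := by
    constructor
    · rintro u y₁ y₂ ⟨z, hz⟩ ⟨z', hz'⟩
      simp only [Prod.mk.injEq] at hz hz'
      rw [hz.2, hz'.2]
    · intro z; exact ⟨z, rfl⟩
    · rintro u y u' y' ⟨z, hz⟩ ⟨z', hz'⟩
      simp only [Prod.mk.injEq] at hz hz'
      obtain ⟨rfl, rfl⟩ := hz
      obtain ⟨rfl, rfl⟩ := hz'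
      refine ⟨z + z', ?_⟩
      simp only [Prod.mk.injEq]
      exact ⟨(add_pow_char z z' (p := p)).symm, (add_zero 0)⟩
    · rintro u y u' y' ⟨z, hz⟩ ⟨z', hz'⟩
      simp only [Prod.mk.injEq] at hz hz'
      obtain ⟨rfl, rfl⟩ := hz
      obtain ⟨rfl, rfl⟩ := hz'
      refine ⟨z * z', ?_⟩
      simp only [Prod.mk.injEq]
      exact ⟨(mul_pow z z' p).symm, by ring⟩
    · rintro u y ⟨z, hz⟩
      simp only [Prod.mk.injEq] at hz
      obtain ⟨rfl, rfl⟩ := hz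
      refine ⟨-z, ?_⟩
      simp only [Prod.mk.injEq]
      constructor
      · rw [neg_pow, neg_one_pow_char K]; ring
      · rw [neg_zero]
    · rintro u y hu ⟨z, hz⟩
      simp only [Prod.mk.injEq] at hz
      obtain ⟨rfl, rfl⟩ := hz
      refine ⟨z⁻¹, ?_⟩
      simp only [Prod.mk.injEq]
      exact ⟨(inv_pow z p).symm, by ring⟩
  obtain ⟨G₁, hG₁, hsub₁, hf₁⟩ := hG₀.extend hp f
    (fun y hy => by
      obtain ⟨z, hz⟩ := hy
      rw [Prod.ext_iff] at hz
      exact hf z hz.1.symm) 1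
  have hub : ∀ c ⊆ {G | IsPD p G ∧ (f, 1) ∈ G}, IsChain (· ⊆ ·) c → c.Nonempty →
        ∃ ub ∈ {G | IsPD p G ∧ (f, 1) ∈ G}, ∀ s ∈ c, s ⊆ ub := by
    intro c hcS hchain hcne
    refine ⟨⋃₀ c, ⟨⟨?_, ?_, ?_, ?_, ?_, ?_⟩, ?_⟩, fun s hs => Set.subset_sUnion_of_mem hs⟩
    · rintro u y₁ y₂ ⟨A, hA, h1⟩ ⟨B, hB, h2⟩
      rcases hchain.total hA hB with h | h
      · exact (hcS hB).1.uniq (h h1) h2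
      · exact (hcS hA).1.uniq h1 (h h2)
    · intro z
      obtain ⟨A, hA⟩ := hcne
      exact ⟨A, hA, (hcS hA).1.pow z⟩
    · rintro u y u' y' ⟨A, hA, h1⟩ ⟨B, hB, h2⟩
      rcases hchain.total hA hB with h | h
      · exact ⟨B, hB, (hcS hB).1.add (h h1) h2⟩
      · exact ⟨A, hA, (hcS hA).1.add h1 (h h2)⟩
    · rintro u y u' y' ⟨A, hA, h1⟩ ⟨B, hB, h2⟩
      rcases hchain.total hA hB with h | h
      · exact ⟨B, hB, (hcS hB).1.mul (h h1) h2⟩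
      · exact ⟨A, hA, (hcS hA).1.mul h1 (h h2)⟩
    · rintro u y ⟨A, hA, h1⟩
      exact ⟨A, hA, (hcS hA).1.neg h1⟩
    · rintro u y hu ⟨A, hA, h1⟩
      exact ⟨A, hA, (hcS hA).1.inv hu h1⟩
    · obtain ⟨A, hA⟩ := hcne
      exact ⟨A, hA, (hcS hA).2⟩

  obtain ⟨m, hm₁sub, hmmax⟩ := zorn_subset_nonempty {G | IsPD p G ∧ (f, 1) ∈ G} hub G₁ ⟨hG₁, hf₁⟩
  have htot : ∀ z : K, ∃ w, (z, w) ∈ m := by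
    intro z
    by_contra h
    push_neg at h
    obtain ⟨G', hG', hsub, hmem⟩ := hmmax.prop.1.extend hp z h 0
    have hG'S : G' ∈ {G | IsPD p G ∧ (f, 1) ∈ G} := ⟨hG', hsub hmmax.prop.2⟩
    have : G' ⊆ m := hmmax.2 hG'S hsub
    exact h 0 (this hmem)
  set D : K → K := fun z => (htot z).choose with hDdef
  have hD : ∀ z, (z, D z) ∈ m := fun z => (htot z).choose_spec
  have huniq := hmmax.prop.1.uniq
  refine ⟨D, ?_, ?_, ?_, ?_⟩
  · exact huniq (hD f) hmmax.prop.2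
  · intro u v; exact huniq (hD (u + v)) (hmmax.prop.1.add (hD u) (hD v))
  · intro u v; exact huniq (hD (u * v)) (hmmax.prop.1.mul (hD u) (hD v))
  · intro z; exact huniq (hD (z ^ p)) (hmmax.prop.1.pow z)


/-- **Theorem 3.3(2), degree 0** (Gabber): if `C` is a perfect valuation ring of characteristic
`p` and `E` is a valuation ring extension of `C`, then for `f : E` the universal derivation
satisfies `d f = 0` in `Ω¹_{E/C}` if and only if `f` is a `p`-th power in `E`. -/
theorem cartier_iso_degree_zero_char_p_valuation_rings
    (p : ℕ) (hp : p.Prime) (C E : Type) [CommRing C] [IsDomain C] [ValuationRing C]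
    [CommRing E] [IsDomain E] [ValuationRing E]
    [CharP C p] (hperf : Function.Bijective (fun x : C => x ^ p))
    [Algebra C E] (hinj : Function.Injective (algebraMap C E))
    (f : E) :
    KaehlerDifferential.D C E f = 0 ↔ ∃ g : E, f = g ^ p := by
  haveI : CharP E p := charP_of_injective_algebraMap hinj p
  haveI : Fact p.Prime := ⟨hp⟩
  constructor
  · intro hd
    by_contra hno
    push_neg at hno
    set K := FractionRing E
    have hiK : Function.Injective (algebraMap E K) := IsFractionRing.injective E K
    haveI : CharP K p := charP_of_injective_algebraMap hiK p
    -- `f` is not a `p`-th power in `K`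
    have hfK : ∀ g : K, g ^ p ≠ algebraMap E K f := by
      intro g hg
      obtain ⟨a, b, hb, hab⟩ := IsFractionRing.div_surjective (A := E) g
      have hb0 : (b : E) ≠ 0 := nonZeroDivisors.ne_zero hb
      have hbK : algebraMap E K b ≠ 0 := fun h => hb0 (hiK (by rw [h, map_zero]))
      obtain ⟨c, hc | hc⟩ := ValuationRing.cond a b
      · -- a * c = b
        rcases eq_or_ne a 0 with rfl | ha0
        · rw [map_zero, zero_div] at hab
          rw [← hab, zero_pow hp.ne_zero] at hg
          have : f = 0 := hiK (by rw [← hg, map_zero])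
          exact hno 0 (by rw [this, zero_pow hp.ne_zero])
        · have haK : algebraMap E K a ≠ 0 := fun h => ha0 (hiK (by rw [h, map_zero]))
          have hcK : algebraMap E K c ≠ 0 := by
            intro h
            apply hbK
            rw [← hc, map_mul, h, mul_zero]
          have hgc : g = (algebraMap E K c)⁻¹ := by
            rw [← hab, ← hc, map_mul]
            rw [div_mul_eq_div_div, div_self haK, one_div]
          have h1 : algebraMap E K (f * c ^ p) = algebraMap E K 1 := by
            rw [map_mul, map_one, map_pow, ← hg, hgc, inv_pow]
            exact inv_mul_cancel₀ (pow_ne_zero _ hcK)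
          have h2 : f * c ^ p = 1 := hiK h1
          have hcu : IsUnit c := by
            apply IsUnit.of_mul_eq_one (c ^ (p - 1) * f)
            calc c * (c ^ (p - 1) * f) = c ^ (p - 1 + 1) * f := by ring
            _ = 1 := by rw [Nat.sub_add_cancel hp.one_le, mul_comm, h2]
          refine hno ↑hcu.unit⁻¹ ?_
          have h3 : (↑hcu.unit⁻¹ : E) * c = 1 := hcu.val_inv_mul
          calc f = f * ((↑hcu.unit⁻¹ : E) * c) ^ p := by rw [h3, one_pow, mul_one]
          _ = (f * c ^ p) * (↑hcu.unit⁻¹ : E) ^ p := by ring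
          _ = (↑hcu.unit⁻¹ : E) ^ p := by rw [h2, one_mul]
      · -- b * c = a
        have hgc : g = algebraMap E K c := by
          rw [← hab, ← hc, map_mul]
          exact mul_div_cancel_left₀ _ hbK
        apply hno c
        apply hiK
        rw [← hg, hgc, map_pow]
    obtain ⟨D, hDf, hDadd, hDmul, hDpow⟩ := exists_pd_derivation p hp (algebraMap E K f) hfK
    -- build a `C`-derivation `E → K` out of `D`
    have hsmulK : ∀ (c : C) (k : K), c • k = algebraMap E K (algebraMap C E c) * k := by
      intro c k
      rw [Algebra.smul_def, IsScalarTower.algebraMap_apply C E K]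
    have hDC : ∀ c : C, D (algebraMap E K (algebraMap C E c)) = 0 := by
      intro c
      obtain ⟨c', hc'⟩ := hperf.2 c
      dsimp at hc'
      rw [← hc', map_pow, map_pow]
      exact hDpow _
    let DE : Derivation C E K :=
    { toFun := fun e => D (algebraMap E K e)
      map_add' := fun u v => by rw [map_add, hDadd]
      map_smul' := fun c e => by
        dsimp only [RingHom.id_apply]
        rw [Algebra.smul_def, map_mul, hDmul, hDC, mul_zero, add_zero, hsmulK]
      map_one_eq_zero' := by
        show D (algebraMap E K 1) = 0
        rw [map_one, ← one_pow p]
        exact hDpow 1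
      leibniz' := fun u v => by
        dsimp only [LinearMap.coe_mk, AddHom.coe_mk]
        show D (algebraMap E K (u * v)) = _
        rw [map_mul, hDmul]
        rw [Algebra.smul_def, Algebra.smul_def] }
    have h0 : DE f = 0 := by
      have := DE.liftKaehlerDifferential_comp_D f
      rw [hd, map_zero] at this
      exact this.symm
    have h1 : DE f = 1 := hDf
    rw [h0] at h1
    exact one_ne_zero h1.symm
  · rintro ⟨g, rfl⟩
    rw [Derivation.leibniz_pow, ← Nat.cast_smul_eq_nsmul E, CharP.cast_eq_zero, zero_smul]
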